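/- Let (X,A) be a measurable space and K : X × X → ℝ a measurable symmetric strongly negative definite kernel with K(x,x) = 0 for all x. If μ, ν ∈ M_K satisfy N_K(μ,ν) = 0, then μ = ν. -/

import Mathlib

open MeasureTheory Filter Topology

noncomputable section

/-- A symmetric kernel `K` is negative definite if
`Σ_{j,k} a_j a_k K(x_j, x_k) ≤ 0` for all finite families of points and reals. -/
def IsNegDefKernel {α : Type*} (K : α → α → ℝ) : Prop :=
  ∀ (n : ℕ) (x : Fin n → α) (a : Fin n → ℝ),
    ∑ j, ∑ k, a j * a k * K (x j) (x k) ≤ 0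

/-- A kernel is strongly negative definite if it is negative definite and, for every
probability measure `Q` and every `Q`-integrable `h` with `∫ h dQ = 0`,
`∫∫ K(x,y) h(x) h(y) dQ dQ = 0` implies `h = 0` `Q`-a.e. -/
def IsStronglyNegDefKernel {α : Type*} [MeasurableSpace α] (K : α → α → ℝ) : Prop :=
  IsNegDefKernel K ∧
    ∀ Q : Measure α, IsProbabilityMeasure Q →
      ∀ h : α → ℝ, Integrable h Q → (∫ x, h x ∂Q) = 0 →
        (∫ x, (∫ y, K x y * h x * h y ∂Q) ∂Q) = 0 → h =ᵐ[Q] 0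

/-- `N_K(μ,ν) = 2∫∫ K dμ dν − ∫∫ K dμ dμ − ∫∫ K dν dν`. -/
def NK {α : Type*} [MeasurableSpace α] (K : α → α → ℝ) (μ ν : Measure α) : ℝ :=
  2 * (∫ x, (∫ y, K x y ∂ν) ∂μ) - (∫ x, (∫ y, K x y ∂μ) ∂μ)
    - (∫ x, (∫ y, K x y ∂ν) ∂ν)

open scoped ENNReal

lemma smul_prod_aux {α β : Type*} [MeasurableSpace α] [MeasurableSpace β]
    (c : ℝ≥0∞) (μ : Measure α) (ν : Measure β) [SFinite μ] [SFinite ν] :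
    (c • μ).prod ν = c • μ.prod ν := by
  ext s hs
  rw [Measure.prod_apply hs, Measure.smul_apply, Measure.prod_apply hs,
    lintegral_smul_measure, smul_eq_mul]

lemma prod_smul_aux {α β : Type*} [MeasurableSpace α] [MeasurableSpace β]
    (c : ℝ≥0∞) (μ : Measure α) (ν : Measure β) [SFinite μ] [SFinite ν] :
    μ.prod (c • ν) = c • μ.prod ν := by
  ext s hs
  rw [Measure.prod_apply hs, Measure.smul_apply, Measure.prod_apply hs, smul_eq_mul,
    ← lintegral_const_mul _ (measurable_measure_prodMk_left hs)]
  simp [Measure.smul_apply]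

/-- For a measurable symmetric strongly negative definite kernel vanishing on the
diagonal, `N_K(μ,ν) = 0` implies `μ = ν` for probability measures `μ, ν ∈ M_K`. -/
theorem NK_eq_zero_implies_eq {α : Type*} [MeasurableSpace α] (K : α → α → ℝ)
    (hKmeas : Measurable (Function.uncurry K))
    (hKsymm : ∀ x y, K x y = K y x)
    (hKdiag : ∀ x, K x x = 0)
    (hKsneg : IsStronglyNegDefKernel K)
    (μ ν : Measure α) [IsProbabilityMeasure μ] [IsProbabilityMeasure ν]
    (hμν : Integrable (Function.uncurry K) (μ.prod ν))
    (hμμ : Integrable (Function.uncurry K) (μ.prod μ))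
    (hνν : Integrable (Function.uncurry K) (ν.prod ν))
    (hzero : NK K μ ν = 0) :
    μ = ν := by
  classical
  set Q : Measure α := (2 : ℝ≥0∞)⁻¹ • (μ + ν) with hQdef
  have h2ne0 : (2 : ℝ≥0∞) ≠ 0 := by norm_num
  have h2netop : (2 : ℝ≥0∞) ≠ ∞ := by norm_num
  have h2inv_ne0 : (2 : ℝ≥0∞)⁻¹ ≠ 0 := by simp [h2netop]
  have h2inv_netop : (2 : ℝ≥0∞)⁻¹ ≠ ∞ := by simp [h2ne0]
  have hQprob : IsProbabilityMeasure Q := by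
    constructor
    rw [hQdef, Measure.smul_apply, Measure.add_apply, measure_univ, measure_univ, smul_eq_mul]
    rw [one_add_one_eq_two, ENNReal.inv_mul_cancel h2ne0 h2netop]
  have hμQ : μ ≪ Q := by
    intro s hs
    rw [hQdef, Measure.smul_apply, Measure.add_apply, smul_eq_mul] at hs
    rcases mul_eq_zero.mp hs with h | h
    · exact absurd h h2inv_ne0
    · exact (add_eq_zero.mp h).1
  have hνQ : ν ≪ Q := by
    intro s hs
    rw [hQdef, Measure.smul_apply, Measure.add_apply, smul_eq_mul] at hs
    rcases mul_eq_zero.mp hs with h | h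
    · exact absurd h h2inv_ne0
    · exact (add_eq_zero.mp h).2
  -- the density difference
  set f : α → ℝ := fun x => (μ.rnDeriv Q x).toReal with hfdef
  set g : α → ℝ := fun x => (ν.rnDeriv Q x).toReal with hgdef
  set h : α → ℝ := fun x => f x - g x with hhdef
  have hfmeas : Measurable f := (Measure.measurable_rnDeriv μ Q).ennreal_toReal
  have hgmeas : Measurable g := (Measure.measurable_rnDeriv ν Q).ennreal_toReal
  have hhmeas : Measurable h := hfmeas.sub hgmeas
  have hfint : Integrable f Q := Measure.integrable_toReal_rnDeriv
  have hgint : Integrable g Q := Measure.integrable_toReal_rnDeriv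
  have hhint : Integrable h Q := hfint.sub hgint
  -- sum of densities is 2
  have h2Q : μ + ν = (2 : ℝ≥0∞) • Q := by
    rw [hQdef, smul_smul, ENNReal.mul_inv_cancel h2ne0 h2netop, one_smul]
  have hsum : ∀ᵐ x ∂Q, μ.rnDeriv Q x + ν.rnDeriv Q x = 2 := by
    have hadd := Measure.rnDeriv_add μ ν Q
    have hsm := Measure.rnDeriv_smul_left_of_ne_top Q Q (r := 2) h2netop
    have hself := Measure.rnDeriv_self Q
    filter_upwards [hadd, hsm, hself] with x h1 h2 h3
    calc μ.rnDeriv Q x + ν.rnDeriv Q x = (μ + ν).rnDeriv Q x := h1.symm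
      _ = ((2 : ℝ≥0∞) • Q).rnDeriv Q x := by rw [h2Q]
      _ = 2 * Q.rnDeriv Q x := by rw [h2]; simp
      _ = 2 := by rw [h3]; simp
  have hltμ := Measure.rnDeriv_lt_top μ Q
  have hltν := Measure.rnDeriv_lt_top ν Q
  have hfg2 : ∀ᵐ x ∂Q, f x + g x = 2 := by
    filter_upwards [hsum, hltμ, hltν] with x h1 h2 h3
    rw [hfdef, hgdef]
    rw [← ENNReal.toReal_add h2.ne h3.ne, h1]
    norm_num
  have hbound_f : ∀ᵐ x ∂Q, ‖f x‖ ≤ 2 := by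
    filter_upwards [hfg2] with x h1
    have h2 : (0:ℝ) ≤ f x := ENNReal.toReal_nonneg
    have h3 : (0:ℝ) ≤ g x := ENNReal.toReal_nonneg
    rw [Real.norm_eq_abs, abs_of_nonneg h2]; linarith
  have hbound_g : ∀ᵐ x ∂Q, ‖g x‖ ≤ 2 := by
    filter_upwards [hfg2] with x h1
    have h2 : (0:ℝ) ≤ f x := ENNReal.toReal_nonneg
    have h3 : (0:ℝ) ≤ g x := ENNReal.toReal_nonneg
    rw [Real.norm_eq_abs, abs_of_nonneg h3]; linarith
  have hbound_h : ∀ᵐ x ∂Q, ‖h x‖ ≤ 2 := by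
    filter_upwards [hfg2] with x h1
    have h2 : (0:ℝ) ≤ f x := ENNReal.toReal_nonneg
    have h3 : (0:ℝ) ≤ g x := ENNReal.toReal_nonneg
    have hx : h x = f x - g x := rfl
    rw [hx, Real.norm_eq_abs, abs_le]
    constructor <;> linarith
  -- ∫ h dQ = 0
  have hint0 : (∫ x, h x ∂Q) = 0 := by
    rw [hhdef]
    have e1 : (∫ x, f x ∂Q) = 1 := by
      rw [hfdef, Measure.integral_toReal_rnDeriv hμQ, probReal_univ]
    have e2 : (∫ x, g x ∂Q) = 1 := by
      rw [hgdef, Measure.integral_toReal_rnDeriv hνQ, probReal_univ]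
    rw [integral_sub hfint hgint, e1, e2, sub_self]
  -- integrability of K over various products
  have hνμ : Integrable (Function.uncurry K) (ν.prod μ) := by
    have := hμν.swap
    convert this using 1
    funext z
    simp [Function.uncurry, hKsymm z.1 z.2]
  have hQμ : Integrable (Function.uncurry K) (Q.prod μ) := by
    rw [hQdef, smul_prod_aux, Measure.add_prod]
    exact (hμμ.add_measure hνμ).smul_measure h2inv_netop
  have hQν : Integrable (Function.uncurry K) (Q.prod ν) := by
    rw [hQdef, smul_prod_aux, Measure.add_prod]
    exact (hμν.add_measure hνν).smul_measure h2inv_netop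
  have hQQ : Integrable (Function.uncurry K) (Q.prod Q) := by
    have e : Q.prod Q = (2 : ℝ≥0∞)⁻¹ • (Q.prod μ + Q.prod ν) := by
      nth_rewrite 2 [hQdef]
      rw [prod_smul_aux, Measure.prod_add]
    rw [e]
    exact (hQμ.add_measure hQν).smul_measure h2inv_netop
  -- change of measure for integrals
  have hμint : ∀ (φ : α → ℝ), (∫ x, f x * φ x ∂Q) = ∫ x, φ x ∂μ := by
    intro φ
    simpa [smul_eq_mul] using MeasureTheory.integral_rnDeriv_smul hμQ (f := φ)
  have hνint : ∀ (φ : α → ℝ), (∫ x, g x * φ x ∂Q) = ∫ x, φ x ∂ν := by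
    intro φ
    simpa [smul_eq_mul] using MeasureTheory.integral_rnDeriv_smul hνQ (f := φ)
  -- inner integral identity
  have key : ∀ᵐ x ∂Q, (∫ y, K x y * h x * h y ∂Q)
      = h x * ((∫ y, K x y ∂μ) - ∫ y, K x y ∂ν) := by
    filter_upwards [hQQ.prod_right_ae] with x hKxQ
    have hKf : Integrable (fun y => f y * K x y) Q :=
      hKxQ.bdd_mul hfmeas.aestronglyMeasurable hbound_f
    have hKg : Integrable (fun y => g y * K x y) Q :=
      hKxQ.bdd_mul hgmeas.aestronglyMeasurable hbound_g
    have step1 : (fun y => K x y * h x * h y)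
        = fun y => h x * (f y * K x y - g y * K x y) := by
      funext y
      rw [hhdef]
      ring
    rw [step1, integral_const_mul, integral_sub hKf hKg, hμint, hνint]
  -- compute the double integral
  have hA : Integrable (fun x => ∫ y, K x y ∂μ) Q := hQμ.integral_prod_left
  have hB : Integrable (fun x => ∫ y, K x y ∂ν) Q := hQν.integral_prod_left
  have hAμ : Integrable (fun x => ∫ y, K x y ∂μ) μ := hμμ.integral_prod_left
  have hBμ : Integrable (fun x => ∫ y, K x y ∂ν) μ := hμν.integral_prod_left
  have hAν : Integrable (fun x => ∫ y, K x y ∂μ) ν := hνμ.integral_prod_left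
  have hBν : Integrable (fun x => ∫ y, K x y ∂ν) ν := hνν.integral_prod_left
  -- swap identity
  have hswap : (∫ x, (∫ y, K x y ∂μ) ∂ν) = ∫ x, (∫ y, K x y ∂ν) ∂μ := by
    have h1 : (∫ x, (∫ y, K x y ∂μ) ∂ν) = ∫ z, K z.1 z.2 ∂(ν.prod μ) :=
      integral_integral hνμ
    have h2 : (∫ x, (∫ y, K x y ∂ν) ∂μ) = ∫ z, K z.2 z.1 ∂(ν.prod μ) :=
      integral_integral_symm hμν
    rw [h1, h2]
    congr 1
    funext z
    exact hKsymm z.1 z.2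
  have hC : Integrable (fun x => (∫ y, K x y ∂μ) - ∫ y, K x y ∂ν) Q := hA.sub hB
  have hE : (∫ x, (∫ y, K x y * h x * h y ∂Q) ∂Q) = 0 := by
    rw [integral_congr_ae key]
    have step1 : (fun x => h x * ((∫ y, K x y ∂μ) - ∫ y, K x y ∂ν))
        = fun x => f x * ((∫ y, K x y ∂μ) - ∫ y, K x y ∂ν)
          - g x * ((∫ y, K x y ∂μ) - ∫ y, K x y ∂ν) := by
      funext x
      rw [hhdef]
      ring
    have hfC : Integrable (fun x => f x * ((∫ y, K x y ∂μ) - ∫ y, K x y ∂ν)) Q :=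
      hC.bdd_mul hfmeas.aestronglyMeasurable hbound_f
    have hgC : Integrable (fun x => g x * ((∫ y, K x y ∂μ) - ∫ y, K x y ∂ν)) Q :=
      hC.bdd_mul hgmeas.aestronglyMeasurable hbound_g
    rw [step1, integral_sub hfC hgC, hμint, hνint,
      integral_sub hAμ hBμ, integral_sub hAν hBν]
    have hnk : NK K μ ν = 0 := hzero
    rw [NK] at hnk
    rw [hswap]
    linarith
  -- conclude h = 0 a.e.
  have hh0 : h =ᵐ[Q] 0 := hKsneg.2 Q hQprob h hhint hint0 hE
  have hfgeq : μ.rnDeriv Q =ᵐ[Q] ν.rnDeriv Q := by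
    filter_upwards [hh0, hltμ, hltν] with x h0 h1 h2
    have : f x = g x := by
      have h0' : f x - g x = 0 := h0
      linarith
    exact (ENNReal.toReal_eq_toReal_iff' h1.ne h2.ne).mp this
  calc μ = Q.withDensity (μ.rnDeriv Q) := (Measure.withDensity_rnDeriv_eq μ Q hμQ).symm
    _ = Q.withDensity (ν.rnDeriv Q) := withDensity_congr_ae hfgeq
    _ = ν := Measure.withDensity_rnDeriv_eq ν Q hνQ
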